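/- Let d ≥ 1, ε > 0, λ ∈ ℝ, let the components of A : ℝ^d → ℝ^d be of class C^∞_pol, and let χ : ℝ^d → ℝ be of class C^∞_pol. Then magnetic Weyl quantization is gauge-covariant: for every f ∈ S(ℝ^{2d}), every φ ∈ S(ℝ^d) and every x ∈ ℝ^d, (Op^{A + ε∇χ}_{ε,λ}(f)φ)(x) = e^{iλχ(εx)} ( Op^A_{ε,λ}(f)( w ↦ e^{−iλχ(εw)} φ(w) ) )(x), where both sides are given by absolutely convergent integrals. -/

import Mathlib

noncomputable section
open MeasureTheory Complex

/-- `ℝ^d` -/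
abbrev Vd (d : ℕ) := Fin d → ℝ

/-- Euclidean dot product. -/
def dotR {d : ℕ} (x y : Vd d) : ℝ := ∑ l, x l * y l

/-- Circulation `Γ^A([u,v]) = Σ_l (v_l - u_l) ∫_0^1 A_l(u + s(v-u)) ds`. -/
def circA {d : ℕ} (A : Vd d → Vd d) (u v : Vd d) : ℝ :=
  ∑ l, (v l - u l) * ∫ s in (0:ℝ)..1, A (u + s • (v - u)) l

/-- The `ε`-scaled circulation `Γ^A_ε([u,v]) := (1/ε) Γ^A([εu,εv])`. -/
def circAe {d : ℕ} (ε : ℝ) (A : Vd d → Vd d) (u v : Vd d) : ℝ :=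
  ε⁻¹ * circA A (ε • u) (ε • v)

/-- A function is of class `C^∞_pol` if it is smooth and it together with all its
derivatives is polynomially bounded. -/
def CPol {E F : Type*} [NormedAddCommGroup E] [NormedSpace ℝ E]
    [NormedAddCommGroup F] [NormedSpace ℝ F] (f : E → F) : Prop :=
  ContDiff ℝ (⊤ : ℕ∞) f ∧
    ∀ n : ℕ, ∃ (C : ℝ) (k : ℕ), ∀ x, ‖iteratedFDeriv ℝ n f x‖ ≤ C * (1 + ‖x‖) ^ k

/-- Magnetic Weyl quantization in the adiabatic scaling:
`(Op^A_{ε,λ}(f)φ)(x) = (2π)^{-d} ∫∫ e^{-i(y-x)·η} e^{-iλΓ^A_ε([x,y])} f((ε/2)(x+y),η) φ(y) dy dη`. -/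
def mOp {d : ℕ} (ε lam : ℝ) (A : Vd d → Vd d) (f : Vd d × Vd d → ℂ)
    (φ : Vd d → ℂ) (x : Vd d) : ℂ :=
  (((2 * Real.pi) ^ d)⁻¹ : ℝ) * ∫ y : Vd d, ∫ η : Vd d,
    Complex.exp (-Complex.I * dotR (y - x) η) *
      Complex.exp (-Complex.I * lam * circAe ε A x y) *
      f ((ε / 2) • (x + y), η) * φ y

/-- The magnetic Wigner transform `W^A_{ε,λ}(φ,ψ)`. -/
def mWig {d : ℕ} (ε lam : ℝ) (A : Vd d → Vd d) (φ ψ : Vd d → ℂ)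
    (X : Vd d × Vd d) : ℂ :=
  ∫ y : Vd d,
    Complex.exp (-Complex.I * dotR y X.2) *
      Complex.exp (-Complex.I * lam *
        circAe ε A (ε⁻¹ • X.1 - (2:ℝ)⁻¹ • y) (ε⁻¹ • X.1 + (2:ℝ)⁻¹ • y)) *
      (starRingEnd ℂ) (φ (ε⁻¹ • X.1 - (2:ℝ)⁻¹ • y)) * ψ (ε⁻¹ • X.1 + (2:ℝ)⁻¹ • y)

/-! ### Auxiliary lemmas -/

lemma norm_exp_re_zero {z : ℂ} (hz : z.re = 0) : ‖Complex.exp z‖ = 1 := by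
  rw [Complex.norm_exp, hz, Real.exp_zero]

lemma norm_exp_neg_I_mul (a : ℝ) : ‖Complex.exp (-Complex.I * a)‖ = 1 :=
  norm_exp_re_zero (by simp)

lemma norm_exp_neg_I_mul' (a b : ℝ) : ‖Complex.exp (-Complex.I * a * b)‖ = 1 :=
  norm_exp_re_zero (by simp)

/-- Continuity of `y ↦ Γ^A_ε([x,y])`. -/
lemma continuous_circAe_snd {d : ℕ} (ε : ℝ) {A : Vd d → Vd d}
    (hA : ∀ l, Continuous fun w => A w l) (x : Vd d) :
    Continuous fun y : Vd d => circAe ε A x y := by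
  unfold circAe circA
  refine continuous_const.mul (continuous_finset_sum _ fun l _ => Continuous.mul ?_ ?_)
  · have : Continuous fun y : Vd d => (ε • y) l := by fun_prop
    exact this.sub continuous_const
  · have hcont : Continuous (Function.uncurry fun (y : Vd d) (s : ℝ) =>
        A (ε • x + s • (ε • y - ε • x)) l) := by
      apply (hA l).comp
      fun_prop
    exact intervalIntegral.continuous_parametric_intervalIntegral_of_continuous' hcont 0 1

/-- Fundamental theorem of calculus for the circulation of a gradient. -/
lemma sum_integral_fderiv {d : ℕ} {χ : Vd d → ℝ} (hχ : ContDiff ℝ (⊤ : ℕ∞) χ)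
    (u v : Vd d) :
    ∑ l, (v l - u l) * ∫ s in (0:ℝ)..1, fderiv ℝ χ (u + s • (v - u)) (Pi.single l 1)
      = χ v - χ u := by
  have hfd : Continuous (fderiv ℝ χ) := hχ.continuous_fderiv (by exact_mod_cast (ENat.top_ne_zero : (⊤:ℕ∞) ≠ 0))
  have hpath : Continuous fun s : ℝ => u + s • (v - u) := by fun_prop
  have hgl : ∀ l : Fin d,
      Continuous fun s : ℝ => fderiv ℝ χ (u + s • (v - u)) (Pi.single l 1) :=
    fun l => (hfd.comp hpath).clm_apply continuous_const
  have hsingle : ∀ s : ℝ, fderiv ℝ χ (u + s • (v - u)) (v - u)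
      = ∑ l, (v l - u l) * fderiv ℝ χ (u + s • (v - u)) (Pi.single l 1) := by
    intro s
    set D := fderiv ℝ χ (u + s • (v - u)) with hD
    have hvu : (v - u) = ∑ l, (v l - u l) • (Pi.single l (1:ℝ) : Vd d) := by
      funext j
      rw [Finset.sum_apply]
      simp [Pi.single_apply]
    rw [hvu, map_sum]
    simp [smul_eq_mul]
  calc ∑ l, (v l - u l) * ∫ s in (0:ℝ)..1, fderiv ℝ χ (u + s • (v - u)) (Pi.single l 1)
      = ∑ l, ∫ s in (0:ℝ)..1, (v l - u l) * fderiv ℝ χ (u + s • (v - u)) (Pi.single l 1) := by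
        refine Finset.sum_congr rfl fun l _ => ?_
        rw [intervalIntegral.integral_const_mul]
    _ = ∫ s in (0:ℝ)..1, ∑ l, (v l - u l) * fderiv ℝ χ (u + s • (v - u)) (Pi.single l 1) :=
        (intervalIntegral.integral_finset_sum fun l _ =>
          (continuous_const.mul (hgl l)).intervalIntegrable 0 1).symm
    _ = ∫ s in (0:ℝ)..1, fderiv ℝ χ (u + s • (v - u)) (v - u) :=
        intervalIntegral.integral_congr fun s _ => (hsingle s).symm
    _ = χ (u + (1:ℝ) • (v - u)) - χ (u + (0:ℝ) • (v - u)) := by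
        have hd : ∀ t ∈ Set.uIcc (0:ℝ) 1, HasDerivAt (fun s : ℝ => χ (u + s • (v - u)))
            (fderiv ℝ χ (u + t • (v - u)) (v - u)) t := by
          intro t _
          have h1 : HasDerivAt (fun s : ℝ => u + s • (v - u)) (v - u) t := by
            simpa using ((hasDerivAt_id t).smul_const (v - u)).const_add u
          exact ((hχ.differentiable (by exact_mod_cast (ENat.top_ne_zero : (⊤:ℕ∞) ≠ 0))
            (u + t • (v - u))).hasFDerivAt).comp_hasDerivAt t h1
        exact intervalIntegral.integral_eq_sub_of_hasDerivAt hd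
          (((hfd.comp hpath).clm_apply continuous_const).intervalIntegrable 0 1)
    _ = χ v - χ u := by simp

/-- Circulation of `A + ε∇χ`. -/
lemma circA_gauge {d : ℕ} (ε : ℝ) {A : Vd d → Vd d} (hA : ∀ l, Continuous fun w => A w l)
    {χ : Vd d → ℝ} (hχ : ContDiff ℝ (⊤ : ℕ∞) χ) (u v : Vd d) :
    circA (fun w => A w + ε • (fun l => fderiv ℝ χ w (Pi.single l 1))) u v
      = circA A u v + ε * (χ v - χ u) := by
  have hfd : Continuous (fderiv ℝ χ) :=
    hχ.continuous_fderiv (by exact_mod_cast (ENat.top_ne_zero : (⊤:ℕ∞) ≠ 0))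
  have hpath : Continuous fun s : ℝ => u + s • (v - u) := by fun_prop
  unfold circA
  have hexp : ∀ l : Fin d,
      (∫ s in (0:ℝ)..1,
        (fun w => A w + ε • (fun m => fderiv ℝ χ w (Pi.single m 1))) (u + s • (v - u)) l)
      = (∫ s in (0:ℝ)..1, A (u + s • (v - u)) l)
        + ε * ∫ s in (0:ℝ)..1, fderiv ℝ χ (u + s • (v - u)) (Pi.single l 1) := by
    intro l
    have h1 : IntervalIntegrable (fun s : ℝ => A (u + s • (v - u)) l) volume 0 1 :=
      ((hA l).comp hpath).intervalIntegrable 0 1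
    have h2 : IntervalIntegrable
        (fun s : ℝ => ε * fderiv ℝ χ (u + s • (v - u)) (Pi.single l 1)) volume 0 1 :=
      (continuous_const.mul ((hfd.comp hpath).clm_apply continuous_const)).intervalIntegrable 0 1
    have : (fun s : ℝ =>
        (fun w => A w + ε • (fun m => fderiv ℝ χ w (Pi.single m 1))) (u + s • (v - u)) l)
        = fun s : ℝ => A (u + s • (v - u)) l
            + ε * fderiv ℝ χ (u + s • (v - u)) (Pi.single l 1) := by
      funext s; simp [smul_eq_mul]
    rw [this, intervalIntegral.integral_add h1 h2, intervalIntegral.integral_const_mul]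
  calc ∑ l, (v l - u l) * ∫ s in (0:ℝ)..1,
        (fun w => A w + ε • (fun m => fderiv ℝ χ w (Pi.single m 1))) (u + s • (v - u)) l
      = ∑ l, ((v l - u l) * ∫ s in (0:ℝ)..1, A (u + s • (v - u)) l)
        + ε * ∑ l, (v l - u l) * ∫ s in (0:ℝ)..1,
            fderiv ℝ χ (u + s • (v - u)) (Pi.single l 1) := by
        rw [Finset.mul_sum, ← Finset.sum_add_distrib]
        refine Finset.sum_congr rfl fun l _ => ?_
        rw [hexp l]; ring
    _ = (∑ l, (v l - u l) * ∫ s in (0:ℝ)..1, A (u + s • (v - u)) l) + ε * (χ v - χ u) := by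
        rw [sum_integral_fderiv hχ u v]

/-- Scaled circulation of `A + ε∇χ`. -/
lemma circAe_gauge {d : ℕ} {ε : ℝ} (hε : ε ≠ 0) {A : Vd d → Vd d}
    (hA : ∀ l, Continuous fun w => A w l)
    {χ : Vd d → ℝ} (hχ : ContDiff ℝ (⊤ : ℕ∞) χ) (u v : Vd d) :
    circAe ε (fun w => A w + ε • (fun l => fderiv ℝ χ w (Pi.single l 1))) u v
      = circAe ε A u v + (χ (ε • v) - χ (ε • u)) := by
  unfold circAe
  rw [circA_gauge ε hA hχ, mul_add, inv_mul_cancel_left₀ hε]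

/-- Main integrability lemma. -/
lemma integrable_kernel {d : ℕ} {ε : ℝ} (hε : ε ≠ 0) (lam : ℝ)
    (f : SchwartzMap (Vd d × Vd d) ℂ) (x : Vd d) {c : Vd d → ℝ} (hc : Continuous c)
    {ψ : Vd d → ℂ} (hψ : Continuous ψ) {Cψ : ℝ} (hψb : ∀ y, ‖ψ y‖ ≤ Cψ) :
    Integrable (fun p : Vd d × Vd d =>
      Complex.exp (-Complex.I * dotR (p.1 - x) p.2) *
        Complex.exp (-Complex.I * lam * c p.1) *
        f ((ε / 2) • (x + p.1), p.2) * ψ p.1) := by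
  have hε2 : (ε / 2) ≠ 0 := div_ne_zero hε two_ne_zero
  set L : (Vd d × Vd d) ≃L[ℝ] (Vd d × Vd d) :=
    ((LinearEquiv.smulOfNeZero ℝ (Vd d) (ε/2) hε2).prodCongr
      (LinearEquiv.refl ℝ (Vd d))).toContinuousLinearEquiv with hL
  set c0 : Vd d × Vd d := ((ε/2) • x, 0) with hc0
  set T : Vd d × Vd d → Vd d × Vd d := fun p => ((ε/2) • (x + p.1), p.2) with hT
  have hTeq : ∀ p, T p = L p + c0 := by
    intro p
    have hLp : L p = ((ε/2) • p.1, p.2) := rfl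
    rw [hT, hLp, hc0]
    ext j
    · simp only [Pi.smul_apply, Pi.add_apply, smul_eq_mul, Prod.fst_add]
      ring
    · simp
  have hTder : ∀ p, HasFDerivAt T (L : (Vd d × Vd d) →L[ℝ] (Vd d × Vd d)) p := by
    intro p
    have h0 : HasFDerivAt (fun q => L q + c0) (L : (Vd d × Vd d) →L[ℝ] (Vd d × Vd d)) p :=
      (L.toContinuousLinearMap.hasFDerivAt).add_const c0
    exact h0.congr_of_eventuallyEq (Filter.Eventually.of_forall fun q => hTeq q)
  have hTgrowth : Function.HasTemperateGrowth T := by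
    apply Function.HasTemperateGrowth.of_fderiv (k := 1)
      (C := ‖(L : (Vd d × Vd d) →L[ℝ] (Vd d × Vd d))‖ + ‖c0‖)
    · have : (fderiv ℝ T) = fun _ => (L : (Vd d × Vd d) →L[ℝ] (Vd d × Vd d)) :=
        funext fun p => (hTder p).fderiv
      rw [this]
      exact Function.HasTemperateGrowth.const _
    · exact fun p => (hTder p).differentiableAt
    · intro p
      rw [hTeq p]
      have h1 : ‖L p + c0‖ ≤ ‖(L : (Vd d × Vd d) →L[ℝ] (Vd d × Vd d))‖ * ‖p‖ + ‖c0‖ :=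
        (norm_add_le _ _).trans (by gcongr; exact L.toContinuousLinearMap.le_opNorm p)
      have h2 := norm_nonneg p
      have h3 := norm_nonneg c0
      have h4 := norm_nonneg (L : (Vd d × Vd d) →L[ℝ] (Vd d × Vd d))
      calc ‖L p + c0‖ ≤ ‖(L : (Vd d × Vd d) →L[ℝ] (Vd d × Vd d))‖ * ‖p‖ + ‖c0‖ := h1
        _ ≤ (‖(L : (Vd d × Vd d) →L[ℝ] (Vd d × Vd d))‖ + ‖c0‖) * (1 + ‖p‖) ^ 1 := by
            rw [pow_one]; nlinarith
  have hTanti : AntilipschitzWith ((‖(L.symm : (Vd d × Vd d) →L[ℝ] (Vd d × Vd d))‖₊) * 1) T := by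
    have h1 : AntilipschitzWith 1 (fun q : Vd d × Vd d => q + c0) :=
      (IsometryEquiv.addRight c0).isometry.antilipschitz
    have h2 := h1.comp L.antilipschitz
    have : T = (fun q : Vd d × Vd d => q + c0) ∘ (L : (Vd d × Vd d) → (Vd d × Vd d)) :=
      funext fun p => hTeq p
    rw [this]
    exact h2
  haveI : (volume : Measure (Vd d × Vd d)).IsAddHaarMeasure := by
    rw [show (volume : Measure (Vd d × Vd d)) = (volume : Measure (Vd d)).prod volume from rfl]
    exact Measure.prod.instIsAddHaarMeasure _ _
  set g : SchwartzMap (Vd d × Vd d) ℂ :=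
    SchwartzMap.compCLMOfAntilipschitz ℝ hTgrowth hTanti f with hg
  have hgapp : ∀ p, g p = f (T p) := fun p => rfl
  have hgint : Integrable (fun p : Vd d × Vd d => ‖g p‖ * Cψ) :=
    (g.integrable (μ := volume)).norm.mul_const Cψ
  refine hgint.mono' ?_ ?_
  · apply Continuous.aestronglyMeasurable
    have hdot : Continuous fun p : Vd d × Vd d => dotR (p.1 - x) p.2 := by
      unfold dotR
      exact continuous_finset_sum _ fun l _ =>
        (((continuous_apply l).comp (continuous_fst.sub continuous_const)).mul
          ((continuous_apply l).comp continuous_snd))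
    refine ((Continuous.mul (Continuous.mul ?_ ?_) ?_).mul (hψ.comp continuous_fst))
    · exact Complex.continuous_exp.comp
        (continuous_const.mul (Complex.continuous_ofReal.comp hdot))
    · exact Complex.continuous_exp.comp
        (continuous_const.mul (Complex.continuous_ofReal.comp (hc.comp continuous_fst)))
    · exact f.continuous.comp
        (((continuous_const.add continuous_fst).const_smul (ε/2)).prodMk continuous_snd)
  · refine Filter.Eventually.of_forall fun p => ?_
    have hnorm : ‖Complex.exp (-Complex.I * dotR (p.1 - x) p.2) *
        Complex.exp (-Complex.I * lam * c p.1) *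
        f ((ε / 2) • (x + p.1), p.2) * ψ p.1‖
        = ‖f ((ε / 2) • (x + p.1), p.2)‖ * ‖ψ p.1‖ := by
      rw [norm_mul, norm_mul, norm_mul, norm_exp_neg_I_mul, norm_exp_neg_I_mul']
      ring
    rw [hnorm, hgapp p]
    exact mul_le_mul_of_nonneg_left (hψb p.1) (norm_nonneg _)

/-- Gauge covariance of magnetic Weyl quantization:
`Op^{A+ε∇χ}_{ε,λ}(f) = e^{iλχ(εx̂)} Op^A_{ε,λ}(f) e^{-iλχ(εx̂)}`,
both sides being given by absolutely convergent integrals. -/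
theorem statement3 (d : ℕ) (hd : 1 ≤ d) (ε : ℝ) (hε : 0 < ε) (lam : ℝ)
    (A : Vd d → Vd d) (hA : ∀ l, CPol fun x : Vd d => A x l)
    (χ : Vd d → ℝ) (hχ : CPol χ)
    (f : SchwartzMap (Vd d × Vd d) ℂ) (φ : SchwartzMap (Vd d) ℂ) (x : Vd d) :
    Integrable (fun p : Vd d × Vd d =>
        Complex.exp (-Complex.I * dotR (p.1 - x) p.2) *
          Complex.exp (-Complex.I * lam *
            circAe ε (fun w => A w + ε • (fun l => fderiv ℝ χ w (Pi.single l 1))) x p.1) *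
          f ((ε / 2) • (x + p.1), p.2) * φ p.1) ∧
    Integrable (fun p : Vd d × Vd d =>
        Complex.exp (-Complex.I * dotR (p.1 - x) p.2) *
          Complex.exp (-Complex.I * lam * circAe ε A x p.1) *
          f ((ε / 2) • (x + p.1), p.2) *
          (Complex.exp (-Complex.I * lam * χ (ε • p.1)) * φ p.1)) ∧
    mOp ε lam (fun w => A w + ε • (fun l => fderiv ℝ χ w (Pi.single l 1))) (⇑f) (⇑φ) x
      = Complex.exp (Complex.I * lam * χ (ε • x)) *
        mOp ε lam A (⇑f) (fun w => Complex.exp (-Complex.I * lam * χ (ε • w)) * φ w) x := by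
  have hχs : ContDiff ℝ (⊤ : ℕ∞) χ := hχ.1
  have hAc : ∀ l, Continuous fun w => A w l := fun l => (hA l).1.continuous
  have hεne : ε ≠ 0 := ne_of_gt hε
  have hfd : Continuous (fderiv ℝ χ) :=
    hχs.continuous_fderiv (by exact_mod_cast (ENat.top_ne_zero : (⊤:ℕ∞) ≠ 0))
  have hA'c : ∀ l, Continuous fun w =>
      (fun w => A w + ε • (fun m => fderiv ℝ χ w (Pi.single m 1))) w l := by
    intro l
    have : (fun w => (fun w => A w + ε • (fun m => fderiv ℝ χ w (Pi.single m 1))) w l)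
        = fun w => A w l + ε * fderiv ℝ χ w (Pi.single l 1) := by
      funext w; simp [smul_eq_mul]
    rw [this]
    exact (hAc l).add (continuous_const.mul (hfd.clm_apply continuous_const))
  obtain ⟨Cφ, hCφ⟩ : ∃ C : ℝ, ∀ y, ‖φ y‖ ≤ C := by
    obtain ⟨C, hC⟩ := φ.decay 0 0
    exact ⟨C, fun y => by simpa using hC.2 y⟩
  have hkey : ∀ y, circAe ε (fun w => A w + ε • (fun l => fderiv ℝ χ w (Pi.single l 1))) x y
      = circAe ε A x y + (χ (ε • y) - χ (ε • x)) := fun y => circAe_gauge hεne hAc hχs x y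
  refine ⟨?_, ?_, ?_⟩
  · exact integrable_kernel hεne lam f x (continuous_circAe_snd ε hA'c x)
      φ.continuous hCφ
  · refine integrable_kernel hεne lam f x (continuous_circAe_snd ε hAc x)
      (ψ := fun w => Complex.exp (-Complex.I * lam * χ (ε • w)) * φ w) ?_ (Cψ := Cφ) ?_
    · have h1 := hχs.continuous
      have h2 := φ.continuous
      fun_prop
    · intro y
      rw [norm_mul, norm_exp_neg_I_mul', one_mul]
      exact hCφ y
  · have hpoint : ∀ y η : Vd d,
        Complex.exp (-Complex.I * dotR (y - x) η) *
          Complex.exp (-Complex.I * lam *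
            circAe ε (fun w => A w + ε • (fun l => fderiv ℝ χ w (Pi.single l 1))) x y) *
          f ((ε / 2) • (x + y), η) * φ y
        = Complex.exp (Complex.I * lam * χ (ε • x)) *
          (Complex.exp (-Complex.I * dotR (y - x) η) *
            Complex.exp (-Complex.I * lam * circAe ε A x y) *
            f ((ε / 2) • (x + y), η) *
            (Complex.exp (-Complex.I * lam * χ (ε • y)) * φ y)) := by
      intro y η
      rw [hkey y]
      rw [show (-Complex.I * lam * ((circAe ε A x y + (χ (ε • y) - χ (ε • x)) : ℝ) : ℂ))
          = (Complex.I * lam * χ (ε • x))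
            + (-Complex.I * lam * circAe ε A x y + -Complex.I * lam * χ (ε • y)) by
        push_cast; ring]
      rw [Complex.exp_add, Complex.exp_add]
      ring
    unfold mOp
    simp only [hpoint, integral_const_mul]
    ring
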